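/- Let d ≥ 2 and n ≥ 1 be integers and let u, v ∈ [0,1]^n. The trace norm between the qudit-encoded pure-state density matrices satisfies ‖ρ(u) − ρ(v)‖₁ = 2√( 1 − ∏_{i=1}^n cos^{2(d−1)}( |u_i − v_i| π/2 ) ). -/

import Mathlib

open MeasureTheory Metric Finset
open scoped ComplexOrder Matrix

noncomputable section

/-- The positive semidefinite square root `Matrix.PosSemidef.sqrt` of Mathlib (December 2024),
which has since been removed; reproduced here with its old definition. -/
def posSemidefSqrt {n : Type*} [Fintype n] [DecidableEq n] {A : Matrix n n ℂ}
    (hA : A.PosSemidef) : Matrix n n ℂ :=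
  hA.1.eigenvectorUnitary.1 * Matrix.diagonal ((↑) ∘ (√·) ∘ hA.1.eigenvalues) *
    (star hA.1.eigenvectorUnitary : Matrix n n ℂ)

/-- Trace norm of a complex square matrix: the trace of the positive semidefinite
square root of `Aᴴ * A`. -/
def traceNorm {m : Type*} [Fintype m] [DecidableEq m] (A : Matrix m m ℂ) : ℝ :=
  ((posSemidefSqrt (Matrix.posSemidef_conjTranspose_mul_self A)).trace).re

open scoped MatrixOrder in
lemma posSemidefSqrt_eq_cfc {n : Type*} [Fintype n] [DecidableEq n] {A : Matrix n n ℂ}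
    (hA : A.PosSemidef) : posSemidefSqrt hA = CFC.sqrt A := by
  rw [CFC.sqrt_eq_cfc, cfc_nnreal_eq_real _ A, hA.1.cfc_eq]
  simp only [posSemidefSqrt, Matrix.IsHermitian.cfc, Unitary.conjStarAlgAut_apply]
  congr 3
  funext i
  simp [Real.coe_sqrt, Real.coe_toNNReal', max_eq_left (hA.eigenvalues_nonneg i)]

open scoped MatrixOrder in
lemma posSemidefSqrt_eq_of_sq_eq {n : Type*} [Fintype n] [DecidableEq n] {A B : Matrix n n ℂ}
    (hB : B.PosSemidef) (hA : A.PosSemidef) (h : B ^ 2 = A) : B = posSemidefSqrt hA := by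
  rw [posSemidefSqrt_eq_cfc]
  exact (CFC.sqrt_unique (by rw [← sq]; exact h) hB.nonneg).symm

/-- Qudit encoding of a pixel value `u ∈ [0,1]`: the `j`-th component (0-indexed) is
`√(binom (d-1) j) · cos^{d-1-j}(πu/2) · sin^j(πu/2)`. -/
def quditVec (d : ℕ) (u : ℝ) : Fin d → ℂ := fun j =>
  (Real.sqrt ((d - 1).choose j) *
    Real.cos (Real.pi * u / 2) ^ (d - 1 - (j : ℕ)) *
    Real.sin (Real.pi * u / 2) ^ (j : ℕ) : ℝ)

/-- Encoded product pure state `|Φ(u)⟩ = φ_d(u_1) ⊗ ⋯ ⊗ φ_d(u_n)`, with `(ℂ^d)^{⊗n}`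
realized as functions `(Fin n → Fin d) → ℂ`. -/
def encState (d n : ℕ) (u : Fin n → ℝ) : (Fin n → Fin d) → ℂ := fun f =>
  ∏ i, quditVec d (u i) (f i)

/-- Density matrix `ρ(u) = |Φ(u)⟩⟨Φ(u)|` of the encoded state. -/
def encRho (d n : ℕ) (u : Fin n → ℝ) :
    Matrix (Fin n → Fin d) (Fin n → Fin d) ℂ := fun a b =>
  encState d n u a * star (encState d n u b)

lemma qudit_inner (d : ℕ) (hd : 1 ≤ d) (a b : ℝ) :
    ∑ j : Fin d, quditVec d a j * quditVec d b j
      = ((Real.cos (Real.pi * a / 2 - Real.pi * b / 2) ^ (d - 1) : ℝ) : ℂ) := by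
  set A := Real.pi * a / 2
  set B := Real.pi * b / 2
  have key : ∑ j : Fin d,
      (Real.sqrt ((d-1).choose j) * Real.cos A ^ (d - 1 - (j:ℕ)) * Real.sin A ^ (j:ℕ)) *
      (Real.sqrt ((d-1).choose j) * Real.cos B ^ (d - 1 - (j:ℕ)) * Real.sin B ^ (j:ℕ))
      = Real.cos (A - B) ^ (d - 1) := by
    rw [Real.cos_sub]
    have hd' : d = (d - 1) + 1 := (Nat.succ_pred_eq_of_pos hd).symm
    rw [Fin.sum_univ_eq_sum_range (fun j =>
      (Real.sqrt ((d-1).choose j) * Real.cos A ^ (d - 1 - j) * Real.sin A ^ j) *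
      (Real.sqrt ((d-1).choose j) * Real.cos B ^ (d - 1 - j) * Real.sin B ^ j))]
    calc ∑ j ∈ Finset.range d,
        (Real.sqrt ((d-1).choose j) * Real.cos A ^ (d - 1 - j) * Real.sin A ^ j) *
        (Real.sqrt ((d-1).choose j) * Real.cos B ^ (d - 1 - j) * Real.sin B ^ j)
        = ∑ j ∈ Finset.range ((d-1)+1),
            (Real.sin A * Real.sin B) ^ j * (Real.cos A * Real.cos B) ^ ((d-1) - j)
              * ((d-1).choose j) := by
          rw [← hd']
          refine Finset.sum_congr rfl fun j _ => ?_
          rw [mul_pow, mul_pow]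
          have : Real.sqrt ((d-1).choose j) * Real.sqrt ((d-1).choose j)
              = ((d-1).choose j : ℝ) := Real.mul_self_sqrt (Nat.cast_nonneg _)
          linear_combination (Real.sin A ^ j * Real.sin B ^ j * Real.cos A ^ (d-1-j) * Real.cos B ^ (d-1-j)) * this
      _ = (Real.sin A * Real.sin B + Real.cos A * Real.cos B) ^ (d-1) := (add_pow _ _ _).symm
      _ = (Real.cos A * Real.cos B + Real.sin A * Real.sin B) ^ (d-1) := by ring
  simp only [quditVec, ← Complex.ofReal_mul]
  rw [← key, Complex.ofReal_sum]

lemma encState_inner (d n : ℕ) (hd : 1 ≤ d) (u v : Fin n → ℝ) :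
    ∑ f : Fin n → Fin d, encState d n u f * encState d n v f
      = ((∏ i, Real.cos (Real.pi * u i / 2 - Real.pi * v i / 2) ^ (d - 1) : ℝ) : ℂ) := by
  have : ∑ f : Fin n → Fin d, encState d n u f * encState d n v f
      = ∏ i, ∑ j : Fin d, quditVec d (u i) j * quditVec d (v i) j := by
    rw [Fintype.prod_sum (fun i j => quditVec d (u i) j * quditVec d (v i) j)]
    exact Finset.sum_congr rfl fun f _ => by
      simp [encState, Finset.prod_mul_distrib]
  rw [this, Complex.ofReal_prod]
  exact Finset.prod_congr rfl fun i _ => qudit_inner d hd (u i) (v i)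

lemma star_encState (d n : ℕ) (u : Fin n → ℝ) (f : Fin n → Fin d) :
    star (encState d n u f) = encState d n u f := by
  simp only [encState, quditVec, star_prod, Complex.star_def, Complex.conj_ofReal]

section outer
variable {ι : Type*} [Fintype ι] [DecidableEq ι]

def outer (x y : ι → ℂ) : Matrix ι ι ℂ := Matrix.of fun a b => x a * y b

lemma outer_mul_outer (x y z w : ι → ℂ) :
    outer x y * outer z w = (∑ t, y t * z t) • outer x w := by
  ext a b
  simp only [Matrix.mul_apply, outer, Matrix.of_apply, Matrix.smul_apply, smul_eq_mul,
    Finset.sum_mul]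
  exact Finset.sum_congr rfl fun t _ => by ring

lemma trace_outer (x y : ι → ℂ) : (outer x y).trace = ∑ a, x a * y a := rfl

end outer

lemma encRho_eq (d n : ℕ) (u : Fin n → ℝ) :
    encRho d n u = outer (encState d n u) (encState d n u) := by
  ext a b
  simp [encRho, outer, star_encState]

/-- closed form for the trace norm between qudit-encoded pure states. -/
theorem stmt7 (d n : ℕ) (hd : 2 ≤ d) (hn : 1 ≤ n)
    (u v : Fin n → ℝ) (hu : ∀ i, u i ∈ Set.Icc (0 : ℝ) 1)
    (hv : ∀ i, v i ∈ Set.Icc (0 : ℝ) 1) :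
    traceNorm (encRho d n u - encRho d n v)
      = 2 * Real.sqrt (1 - ∏ i, Real.cos (|u i - v i| * Real.pi / 2) ^ (2 * (d - 1))) := by
  have hd1 : 1 ≤ d := le_trans one_le_two hd
  set ψ := encState d n u with hψdef
  set χ := encState d n v with hχdef
  set c : ℝ := ∏ i, Real.cos (Real.pi * u i / 2 - Real.pi * v i / 2) ^ (d - 1) with hcdef
  -- basic cos facts
  have habs : ∀ i, |u i - v i| ≤ 1 := by
    intro i
    rw [abs_sub_le_iff]
    constructor <;> nlinarith [(hu i).1, (hu i).2, (hv i).1, (hv i).2]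
  have hargeq : ∀ i, Real.pi * u i / 2 - Real.pi * v i / 2 = (u i - v i) * Real.pi / 2 :=
    fun i => by ring
  have hcos_nonneg : ∀ i, 0 ≤ Real.cos (Real.pi * u i / 2 - Real.pi * v i / 2) := by
    intro i
    apply Real.cos_nonneg_of_mem_Icc
    rw [hargeq i]
    constructor
    · nlinarith [habs i, abs_le.1 (habs i), Real.pi_pos]
    · nlinarith [abs_le.1 (habs i), Real.pi_pos]
  have hg_nonneg : ∀ i, 0 ≤ Real.cos (Real.pi * u i / 2 - Real.pi * v i / 2) ^ (d - 1) :=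
    fun i => pow_nonneg (hcos_nonneg i) _
  have hg_le_one : ∀ i, Real.cos (Real.pi * u i / 2 - Real.pi * v i / 2) ^ (d - 1) ≤ 1 :=
    fun i => pow_le_one₀ (hcos_nonneg i) (Real.cos_le_one _)
  have hc_nonneg : 0 ≤ c := Finset.prod_nonneg fun i _ => hg_nonneg i
  have hc_le_one : c ≤ 1 := Finset.prod_le_one (fun i _ => hg_nonneg i) (fun i _ => hg_le_one i)
  -- product identity
  have hcoseq : ∀ i, Real.cos (|u i - v i| * Real.pi / 2)
      = Real.cos (Real.pi * u i / 2 - Real.pi * v i / 2) := by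
    intro i
    have h2 : Real.cos (|u i - v i| * Real.pi / 2)
        = Real.cos ((u i - v i) * Real.pi / 2) := by
      rw [← Real.cos_abs ((u i - v i) * Real.pi / 2)]
      congr 1
      rw [abs_div, abs_mul, abs_of_pos Real.pi_pos, abs_two]
    rw [h2, hargeq i]
  have hprod : ∏ i, Real.cos (|u i - v i| * Real.pi / 2) ^ (2 * (d - 1)) = c ^ 2 := by
    rw [hcdef, ← Finset.prod_pow]
    exact Finset.prod_congr rfl fun i _ => by
      rw [hcoseq i, ← pow_mul, mul_comm (d-1) 2]
  rw [hprod]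
  -- inner products
  have hψψ : ∑ t, ψ t * ψ t = ((1 : ℝ) : ℂ) := by
    rw [hψdef, encState_inner d n hd1 u u]
    norm_num
  have hχχ : ∑ t, χ t * χ t = ((1 : ℝ) : ℂ) := by
    rw [hχdef, encState_inner d n hd1 v v]
    norm_num
  have hψχ : ∑ t, ψ t * χ t = ((c : ℝ) : ℂ) := by
    rw [hψdef, hχdef, encState_inner d n hd1 u v]
  have hχψ : ∑ t, χ t * ψ t = ((c : ℝ) : ℂ) := by
    rw [← hψχ]
    exact Finset.sum_congr rfl fun t _ => mul_comm _ _
  set A := encRho d n u - encRho d n v with hAset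
  have hAdef : A = outer ψ ψ - outer χ χ := by
    rw [hAset, encRho_eq, encRho_eq]
  have hsψ : ∀ f, (starRingEnd ℂ) (ψ f) = ψ f := fun f => star_encState d n u f
  have hsχ : ∀ f, (starRingEnd ℂ) (χ f) = χ f := fun f => star_encState d n v f
  have hAherm : Aᴴ = A := by
    rw [hAdef]
    ext a b
    simp only [Matrix.conjTranspose_apply, Matrix.sub_apply, outer, Matrix.of_apply,
      star_sub, star_mul', RCLike.star_def, hsψ, hsχ]
    ring
  have hP : Aᴴ * A = (outer ψ ψ + outer χ χ) - ((c : ℝ) : ℂ) • (outer ψ χ + outer χ ψ) := by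
    rw [hAherm, hAdef]
    simp only [sub_mul, mul_sub, outer_mul_outer, hψψ, hχχ, hψχ, hχψ,
      Complex.ofReal_one, one_smul]
    module
  rcases eq_or_ne u v with huv | huv
  · -- u = v : both sides are zero
    subst huv
    have hA0 : A = 0 := by rw [hAset, sub_self]
    have hc1 : c = 1 := by
      rw [hcdef]
      apply Finset.prod_eq_one
      intro i _
      rw [sub_self, Real.cos_zero, one_pow]
    have hsqrt : (0 : Matrix (Fin n → Fin d) (Fin n → Fin d) ℂ)
        = posSemidefSqrt (Matrix.posSemidef_conjTranspose_mul_self A) :=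
      posSemidefSqrt_eq_of_sq_eq Matrix.PosSemidef.zero _ (by rw [hA0]; simp)
    rw [traceNorm, ← hsqrt, hc1]
    simp
  · -- u ≠ v : strict case
    obtain ⟨i0, hi0⟩ : ∃ i, u i ≠ v i := Function.ne_iff.mp huv
    have hgi0 : Real.cos (Real.pi * u i0 / 2 - Real.pi * v i0 / 2) ^ (d - 1) < 1 := by
      apply pow_lt_one₀ (hcos_nonneg i0) _ (by omega)
      apply lt_of_le_of_ne (Real.cos_le_one _)
      intro h
      have harg : Real.pi * u i0 / 2 - Real.pi * v i0 / 2 = 0 :=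
        (Real.cos_eq_one_iff_of_lt_of_lt
          (by rw [hargeq i0]; nlinarith [abs_le.1 (habs i0), Real.pi_pos])
          (by rw [hargeq i0]; nlinarith [abs_le.1 (habs i0), Real.pi_pos])).1 h
      rw [hargeq i0] at harg
      have := Real.pi_pos
      have : u i0 - v i0 = 0 := by
        by_contra h0
        have : (u i0 - v i0) * Real.pi / 2 ≠ 0 := by
          apply div_ne_zero _ two_ne_zero
          exact mul_ne_zero (sub_ne_zero.mpr hi0) (ne_of_gt Real.pi_pos)
        exact this harg
      exact hi0 (sub_eq_zero.mp this)
    have hclt : c < 1 := by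
      calc c = Real.cos (Real.pi * u i0 / 2 - Real.pi * v i0 / 2) ^ (d - 1)
            * ∏ i ∈ Finset.univ.erase i0, Real.cos (Real.pi * u i / 2 - Real.pi * v i / 2) ^ (d - 1) := by
              rw [hcdef, ← Finset.mul_prod_erase _ _ (Finset.mem_univ i0)]
        _ ≤ Real.cos (Real.pi * u i0 / 2 - Real.pi * v i0 / 2) ^ (d - 1) * 1 := by
              apply mul_le_mul_of_nonneg_left _ (hg_nonneg i0)
              exact Finset.prod_le_one (fun i _ => hg_nonneg i) (fun i _ => hg_le_one i)
        _ < 1 := by rw [mul_one]; exact hgi0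
    have hs_pos : 0 < 1 - c ^ 2 := by nlinarith
    set s : ℝ := Real.sqrt (1 - c ^ 2) with hsdef
    have hs_pos' : 0 < s := Real.sqrt_pos.mpr hs_pos
    have hss : s * s = 1 - c ^ 2 := Real.mul_self_sqrt (le_of_lt hs_pos)
    -- the square root matrix
    set B : Matrix (Fin n → Fin d) (Fin n → Fin d) ℂ := ((s⁻¹ : ℝ) : ℂ) • (Aᴴ * A) with hBdef
    have hPP : (Aᴴ * A) * (Aᴴ * A) = (((1 - c ^ 2 : ℝ)) : ℂ) • (Aᴴ * A) := by
      rw [hP]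
      simp only [sub_mul, mul_sub, add_mul, mul_add, Matrix.smul_mul, Matrix.mul_smul,
        outer_mul_outer, hψψ, hχχ, hψχ, hχψ, Complex.ofReal_one, one_smul, smul_smul]
      push_cast
      module
    have hB_psd : B.PosSemidef := by
      refine Matrix.PosSemidef.of_dotProduct_mulVec_nonneg ?_ ?_
      · show Bᴴ = B
        rw [hBdef, Matrix.conjTranspose_smul,
          Matrix.IsHermitian.eq (Matrix.isHermitian_conjTranspose_mul_self A),
          Complex.star_def, Complex.conj_ofReal]
      · intro x
        rw [hBdef, Matrix.smul_mulVec, dotProduct_smul, smul_eq_mul]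
        apply mul_nonneg
        · exact Complex.zero_le_real.mpr (inv_nonneg.mpr (le_of_lt hs_pos'))
        · exact (Matrix.posSemidef_conjTranspose_mul_self A).dotProduct_mulVec_nonneg x
    have hB_sq : B ^ 2 = Aᴴ * A := by
      rw [pow_two, hBdef, Matrix.smul_mul, Matrix.mul_smul, hPP, smul_smul, smul_smul]
      have : ((s⁻¹ : ℝ) : ℂ) * ((s⁻¹ : ℝ) : ℂ) * (((1 - c ^ 2 : ℝ)) : ℂ) = 1 := by
        rw [← Complex.ofReal_mul, ← Complex.ofReal_mul, ← hss,
          show s⁻¹ * s⁻¹ * (s * s) = 1 from by field_simp, Complex.ofReal_one]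
      rw [this, one_smul]
    have hsqrt : B = posSemidefSqrt (Matrix.posSemidef_conjTranspose_mul_self A) :=
      posSemidefSqrt_eq_of_sq_eq hB_psd _ hB_sq
    have htr : (Aᴴ * A).trace = ((2 - 2 * c ^ 2 : ℝ) : ℂ) := by
      rw [hP]
      rw [Matrix.trace_sub, Matrix.trace_add, Matrix.trace_smul, Matrix.trace_add,
        trace_outer, trace_outer, trace_outer, trace_outer, hψψ, hχχ, hψχ, hχψ,
        smul_eq_mul]
      push_cast
      ring
    rw [traceNorm, ← hsqrt, hBdef, Matrix.trace_smul, htr, smul_eq_mul,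
      ← Complex.ofReal_mul, Complex.ofReal_re]
    rw [show s⁻¹ * (2 - 2 * c ^ 2) = 2 * s from by
      rw [show (2 : ℝ) - 2 * c ^ 2 = 2 * (s * s) from by rw [hss]; ring]
      field_simp]

end
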